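/- For any positive integer n_1, the 2-dimensional grid graph G_{n_1,2} (vertex set {0,…,n_1−1} × {0,1}, vertices adjacent iff they differ by exactly 1 in exactly one coordinate) is a star-1-PCG. -/

import Mathlib

/-- The 2-dimensional grid graph on `Fin n₁ × Fin n₂`: two vertices are adjacent
iff they differ by exactly 1 in exactly one coordinate. -/
def gridGraph (n₁ n₂ : ℕ) : SimpleGraph (Fin n₁ × Fin n₂) where
  Adj u v := |(u.1 : ℤ) - v.1| + |(u.2 : ℤ) - v.2| = 1
  symm := ⟨by intro u v h; simpa [abs_sub_comm] using h⟩
  loopless := ⟨by intro u h; simp at h⟩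

/-- A graph is a star-1-PCG if there are nonnegative vertex weights and one
interval of nonnegative reals such that two distinct vertices are adjacent iff
the sum of their weights lies in the interval. -/
def IsStar1PCG {V : Type*} (G : SimpleGraph V) : Prop :=
  ∃ (w : V → ℝ) (I : Set ℝ),
    (∀ v, 0 ≤ w v) ∧ I.OrdConnected ∧ I ⊆ Set.Ici 0 ∧
    (∀ a b : V, a ≠ b → (G.Adj a b ↔ w a + w b ∈ I))

/-- integer part of the weight function -/
def gw (n₁ : ℕ) (p : Fin n₁ × Fin 2) : ℤ :=
  (if p.2 = 0 then (1:ℤ) else -1) * ((-1:ℤ)^(p.1:ℕ) * ((p.1:ℕ)+1))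

lemma gw_bound (n₁ : ℕ) (p : Fin n₁ × Fin 2) : |gw n₁ p| ≤ (n₁ : ℤ) := by
  have h1 : ((p.1 : ℕ) : ℤ) + 1 ≤ (n₁ : ℤ) := by exact_mod_cast p.1.isLt
  have h2 : (0:ℤ) ≤ ((p.1 : ℕ) : ℤ) + 1 := by positivity
  unfold gw
  rcases Nat.even_or_odd (p.1 : ℕ) with he | ho <;>
    [rw [he.neg_one_pow]; rw [ho.neg_one_pow]] <;>
    split <;> rw [abs_le] <;> constructor <;> nlinarith

lemma coreAdd (i i' : ℕ) :
    |(i:ℤ) - (i':ℤ)| = 1 ↔ |(-1:ℤ)^i*((i:ℤ)+1) + (-1:ℤ)^i'*((i':ℤ)+1)| ≤ 1 := by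
  rw [abs_eq (by norm_num : (0:ℤ) ≤ 1), abs_le]
  rcases Nat.even_or_odd i with he | ho <;> rcases Nat.even_or_odd i' with he' | ho'
  · rw [he.neg_one_pow, he'.neg_one_pow]
    obtain ⟨k, hk⟩ := he; obtain ⟨k', hk'⟩ := he'; omega
  · rw [he.neg_one_pow, ho'.neg_one_pow]
    obtain ⟨k, hk⟩ := he; obtain ⟨k', hk'⟩ := ho'; omega
  · rw [ho.neg_one_pow, he'.neg_one_pow]
    obtain ⟨k, hk⟩ := ho; obtain ⟨k', hk'⟩ := he'; omega
  · rw [ho.neg_one_pow, ho'.neg_one_pow]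
    obtain ⟨k, hk⟩ := ho; obtain ⟨k', hk'⟩ := ho'; omega

lemma coreSub (i i' : ℕ) :
    (i:ℤ) = (i':ℤ) ↔ |(-1:ℤ)^i*((i:ℤ)+1) - (-1:ℤ)^i'*((i':ℤ)+1)| ≤ 1 := by
  rw [abs_le]
  rcases Nat.even_or_odd i with he | ho <;> rcases Nat.even_or_odd i' with he' | ho'
  · rw [he.neg_one_pow, he'.neg_one_pow]
    obtain ⟨k, hk⟩ := he; obtain ⟨k', hk'⟩ := he'; omega
  · rw [he.neg_one_pow, ho'.neg_one_pow]
    obtain ⟨k, hk⟩ := he; obtain ⟨k', hk'⟩ := ho'; omega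
  · rw [ho.neg_one_pow, he'.neg_one_pow]
    obtain ⟨k, hk⟩ := ho; obtain ⟨k', hk'⟩ := he'; omega
  · rw [ho.neg_one_pow, ho'.neg_one_pow]
    obtain ⟨k, hk⟩ := ho; obtain ⟨k', hk'⟩ := ho'; omega

theorem stmt6 (n₁ : ℕ) (hn₁ : 1 ≤ n₁) : IsStar1PCG (gridGraph n₁ 2) := by
  have hNpos : (0:ℝ) < 4 * (n₁:ℝ) := by positivity
  have h1n : (1:ℝ) ≤ (n₁:ℝ) := by exact_mod_cast hn₁
  refine ⟨fun p => (2*(n₁:ℝ) + (gw n₁ p : ℝ)) / (4*(n₁:ℝ)),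
    Set.Icc ((4*(n₁:ℝ) - 1)/(4*(n₁:ℝ))) ((4*(n₁:ℝ) + 1)/(4*(n₁:ℝ))), ?_, ?_, ?_, ?_⟩
  · intro p
    apply div_nonneg _ hNpos.le
    have h2 : -((n₁:ℤ):ℝ) ≤ (gw n₁ p : ℝ) := by
      exact_mod_cast (abs_le.mp (gw_bound n₁ p)).1
    push_cast at h2 ⊢
    linarith
  · exact Set.ordConnected_Icc
  · intro x hx
    have : (0:ℝ) ≤ (4*(n₁:ℝ) - 1)/(4*(n₁:ℝ)) := by
      apply div_nonneg _ hNpos.le; linarith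
    exact le_trans this hx.1
  · rintro ⟨i, j⟩ ⟨i', j'⟩ hne
    have hsum : (2*(n₁:ℝ) + (gw n₁ (i,j) : ℝ)) / (4*(n₁:ℝ)) + (2*(n₁:ℝ) + (gw n₁ (i',j') : ℝ)) / (4*(n₁:ℝ))
        = (4*(n₁:ℝ) + ((gw n₁ (i,j) + gw n₁ (i',j') : ℤ) : ℝ)) / (4*(n₁:ℝ)) := by
      rw [← add_div]; push_cast; ring_nf
    rw [hsum, Set.mem_Icc, div_le_div_iff_of_pos_right hNpos, div_le_div_iff_of_pos_right hNpos]
    have hiff : (4*(n₁:ℝ) - 1 ≤ 4*(n₁:ℝ) + ((gw n₁ (i,j) + gw n₁ (i',j') : ℤ) : ℝ) ∧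
        4*(n₁:ℝ) + ((gw n₁ (i,j) + gw n₁ (i',j') : ℤ) : ℝ) ≤ 4*(n₁:ℝ) + 1)
        ↔ |gw n₁ (i,j) + gw n₁ (i',j')| ≤ 1 := by
      rw [abs_le]
      constructor
      · rintro ⟨h1, h2⟩
        constructor
        · exact_mod_cast (by linarith : (-1:ℝ) ≤ ((gw n₁ (i,j) + gw n₁ (i',j') : ℤ) : ℝ))
        · exact_mod_cast (by linarith : ((gw n₁ (i,j) + gw n₁ (i',j') : ℤ) : ℝ) ≤ 1)
      · rintro ⟨h1, h2⟩
        have h1' : (-1:ℝ) ≤ ((gw n₁ (i,j) + gw n₁ (i',j') : ℤ) : ℝ) := by exact_mod_cast h1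
        have h2' : ((gw n₁ (i,j) + gw n₁ (i',j') : ℤ) : ℝ) ≤ 1 := by exact_mod_cast h2
        constructor <;> linarith
    rw [show (gridGraph n₁ 2).Adj (i,j) (i',j') ↔
        |(i:ℤ) - (i':ℤ)| + |(j:ℤ) - (j':ℤ)| = 1 from Iff.rfl, hiff]
    unfold gw
    fin_cases j <;> fin_cases j' <;> norm_num
    · exact coreAdd i i'
    · rw [sub_eq_zero,
        show ((-1:ℤ)^(i:ℕ)*((i:ℤ)+1) + -((-1:ℤ)^(i':ℕ)*((i':ℤ)+1)))
          = ((-1:ℤ)^(i:ℕ)*((i:ℤ)+1) - (-1:ℤ)^(i':ℕ)*((i':ℤ)+1)) by ring]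
      exact coreSub i i'
    · rw [sub_eq_zero, show ((i:ℤ) = i') ↔ ((i':ℤ) = i) from eq_comm,
        show (-((-1:ℤ)^(i:ℕ)*((i:ℤ)+1)) + (-1:ℤ)^(i':ℕ)*((i':ℤ)+1))
          = ((-1:ℤ)^(i':ℕ)*((i':ℤ)+1) - (-1:ℤ)^(i:ℕ)*((i:ℤ)+1)) by ring]
      exact coreSub i' i
    · rw [show (-((-1:ℤ)^(i:ℕ)*((i:ℤ)+1)) + -((-1:ℤ)^(i':ℕ)*((i':ℤ)+1)))
          = -((-1:ℤ)^(i:ℕ)*((i:ℤ)+1) + (-1:ℤ)^(i':ℕ)*((i':ℤ)+1)) by ring, abs_neg]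
      exact coreAdd i i'
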